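/- arXiv:2112.07182 — 2 statements merged into one kernel-verified Lean document; each statement's English description precedes it below -/
import Mathlib

section
/- For n ≥ 2 and a ∈ ℂ, the polynomial f_a(z₀,…,z_n) = Σ_{i=0}^n z_i^{n+1} − a·∏_{i=0}^n z_i has a critical point other than the origin (equivalently, the projective hypersurface {f_a = 0} ⊂ ℙ^n is singular) if and only if a^{n+1} = (n+1)^{n+1}. -/
/-- for n ≥ 2 and a ∈ ℂ, the Dwork polynomial
f_a(z) = Σ_{i=0}^n z_i^{n+1} − a ∏_{i=0}^n z_i has a critical point other than the
origin (a common zero z ≠ 0 of all partial derivatives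
∂f_a/∂z_i = (n+1) z_i^n − a ∏_{j≠i} z_j) if and only if a^{n+1} = (n+1)^{n+1}. -/
theorem stmt2 (n : ℕ) (hn : 2 ≤ n) (a : ℂ) :
    (∃ z : Fin (n+1) → ℂ, z ≠ 0 ∧
        ∀ i, ((n : ℂ) + 1) * z i ^ n - a * ∏ j ∈ Finset.univ.erase i, z j = 0)
      ↔ a ^ (n+1) = ((n : ℂ) + 1) ^ (n+1) := by
  set N : ℂ := (n : ℂ) + 1 with hNdef
  have hNne : N ≠ 0 := by
    have := Nat.cast_add_one_ne_zero (R := ℂ) n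
    simpa [hNdef] using this
  constructor
  · rintro ⟨z, hz, h⟩
    have key : ∀ i, N * z i ^ (n+1) = a * ∏ j, z j := by
      intro i
      have h1 : N * z i ^ n = a * ∏ j ∈ Finset.univ.erase i, z j :=
        sub_eq_zero.mp (h i)
      have h2 : (∏ j ∈ Finset.univ.erase i, z j) * z i = ∏ j, z j :=
        Finset.prod_erase_mul _ _ (Finset.mem_univ i)
      calc N * z i ^ (n+1) = (N * z i ^ n) * z i := by ring
        _ = (a * ∏ j ∈ Finset.univ.erase i, z j) * z i := by rw [h1]
        _ = a * ∏ j, z j := by rw [mul_assoc, h2]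
    by_cases hP : (∏ j, z j) = 0
    · exfalso
      apply hz
      funext i
      have hk := key i
      rw [hP, mul_zero, mul_eq_zero] at hk
      have : z i ^ (n+1) = 0 := hk.resolve_left hNne
      simpa using pow_eq_zero_iff (Nat.succ_ne_zero n) |>.mp this
    · have hprod : ∏ i : Fin (n+1), (N * z i ^ (n+1))
          = ∏ _i : Fin (n+1), (a * ∏ j, z j) :=
        Finset.prod_congr rfl (fun i _ => key i)
      rw [Finset.prod_mul_distrib, Finset.prod_const, Finset.prod_pow,
        Finset.prod_const, Finset.card_univ, Fintype.card_fin, mul_pow] at hprod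
      have := mul_right_cancel₀ (pow_ne_zero (n+1) hP) hprod
      exact this.symm
  · intro ha
    have haz : a ≠ 0 := by
      intro h0
      rw [h0] at ha
      exact hNne ((pow_eq_zero_iff (Nat.succ_ne_zero n)).mp
        (by rw [← ha]; simp))
    refine ⟨fun i => if i = 0 then N / a else 1, ?_, ?_⟩
    · intro hzero
      have h0 := congrFun hzero 0
      simp only [if_pos rfl, Pi.zero_apply] at h0
      rcases div_eq_zero_iff.mp h0 with h | h
      · exact hNne h
      · exact haz h
    · intro i
      by_cases hi : i = 0
      · subst hi
        have hp : ∏ j ∈ Finset.univ.erase (0 : Fin (n+1)),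
            (if j = 0 then N / a else 1) = 1 := by
          apply Finset.prod_eq_one
          intro j hj
          rw [Finset.mem_erase] at hj
          simp [hj.1]
        rw [hp]
        beta_reduce
        rw [if_pos rfl, mul_one, sub_eq_zero, div_pow]
        rw [hNdef] at ha
        field_simp
        linear_combination -ha
      · have hp : ∏ j ∈ Finset.univ.erase i,
            (fun j => if j = 0 then N / a else 1) j = N / a := by
          rw [Finset.prod_eq_single 0]
          · simp
          · intro b _ hb; simp [hb]
          · intro hmem
            exact absurd (Finset.mem_erase.mpr ⟨Ne.symm hi, Finset.mem_univ 0⟩) hmem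
        rw [hp]
        beta_reduce
        rw [if_neg hi, one_pow, mul_one, mul_div_cancel₀ _ haz, sub_self]
end

section
/- (Clausen-type symmetric square) The third-order differential operator θ(θ−1/4)(θ−2/4) − b(θ+1/4)³ annihilates the square of any solution of the second-order operator θ(θ−1/4) − b(θ+1/8)², where θ = b d/db. Concretely, if u is a formal power series solution (times b^ρ) of (θ(θ−1/4) − b(θ+1/8)²)u = 0, then (θ(θ−1/4)(θ−2/4) − b(θ+1/4)³)(u²) = 0. -/
/- A (generalized) series b^ρ·Σ_{k≥0} g_k b^k is encoded by the exponent shift ρ ∈ ℂ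
together with its coefficient sequence g : ℕ → ℂ; the Euler operator θ = b·d/db acts on
b^{ρ+k} by multiplication by (ρ+k), so an ODE in θ becomes a coefficient recurrence. -/

/-- `SolSecond ρ g` says that u = b^ρ Σ g_k b^k satisfies (θ(θ−1/4) − b(θ+1/8)²) u = 0. -/
def SolSecond (ρ : ℂ) (g : ℕ → ℂ) : Prop :=
  ∀ k : ℕ, (ρ + k) * (ρ + k - 1/4) * g k
      = if k = 0 then 0 else (ρ + (k - 1 : ℕ) + 1/8)^2 * g (k - 1)

/-- `SolThird ρ h` says that v = b^ρ Σ h_k b^k satisfies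
(θ(θ−1/4)(θ−2/4) − b(θ+1/4)³) v = 0. -/
def SolThird (ρ : ℂ) (h : ℕ → ℂ) : Prop :=
  ∀ k : ℕ, (ρ + k) * (ρ + k - 1/4) * (ρ + k - 2/4) * h k
      = if k = 0 then 0 else (ρ + (k - 1 : ℕ) + 1/4)^3 * h (k - 1)

private lemma sum_sym (N : ℕ) (F G : ℕ → ℂ)
    (h : ∀ j, j ≤ N → F j + F (N - j) = G j + G (N - j)) :
    ∑ j ∈ Finset.range (N + 1), F j = ∑ j ∈ Finset.range (N + 1), G j := by
  have hF := Finset.sum_range_reflect F (N + 1)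
  have hG := Finset.sum_range_reflect G (N + 1)
  simp only [Nat.add_sub_cancel] at hF hG
  have h2 : ∑ j ∈ Finset.range (N + 1), (F j + F (N - j))
      = ∑ j ∈ Finset.range (N + 1), (G j + G (N - j)) :=
    Finset.sum_congr rfl fun j hj => h j (Nat.lt_succ_iff.mp (Finset.mem_range.mp hj))
  rw [Finset.sum_add_distrib, Finset.sum_add_distrib] at h2
  linear_combination h2 / 2 - hF / 2 + hG / 2

/-- Clausen-type symmetric square: if u = b^ρ Σ g_k b^k is a solution of
the second-order operator θ(θ−1/4) − b(θ+1/8)², then its square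
u² = b^{2ρ} Σ_k (Σ_{i+j=k} g_i g_j) b^k is annihilated by the third-order operator
θ(θ−1/4)(θ−2/4) − b(θ+1/4)³. -/
theorem stmt9 (ρ : ℂ) (g : ℕ → ℂ) (hg : SolSecond ρ g) :
    SolThird (2 * ρ) (fun k => ∑ i ∈ Finset.range (k+1), g i * g (k - i)) := by
  intro k
  match k with
  | 0 =>
    have h0 := hg 0
    rw [if_pos rfl] at h0
    simp only [if_pos rfl, Finset.sum_range_succ, Finset.sum_range_zero, Nat.sub_self,
      Nat.cast_zero, zero_add]
    push_cast at h0 ⊢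
    linear_combination (4 * (2*ρ - 1/4) * g 0) * h0
  | n + 1 =>
    simp only [Nat.add_sub_cancel, if_neg (Nat.succ_ne_zero n)]
    have step1 :
        (2*ρ + ((n:ℂ)+1)) * (2*ρ + ((n:ℂ)+1) - 1/4) * (2*ρ + ((n:ℂ)+1) - 2/4)
            * ∑ i ∈ Finset.range (n+1+1), g i * g (n+1-i)
          = ∑ j ∈ Finset.range (n+1+1),
              (8*ρ + 6*((n:ℂ)+1) - 4*(j:ℂ) - 1)
                * (g (n+1-j) * ((ρ + (j:ℂ)) * (ρ + (j:ℂ) - 1/4) * g j)) := by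
      rw [Finset.mul_sum]
      refine sum_sym (n+1) _ _ (fun j hj => ?_)
      have e1 : n + 1 - (n + 1 - j) = j := Nat.sub_sub_self hj
      have e2 : ((n + 1 - j : ℕ) : ℂ) = (n : ℂ) + 1 - (j : ℂ) := by
        rw [Nat.cast_sub hj]; push_cast; ring
      rw [e1, e2]
      ring
    have step2 :
        (2*ρ + (n:ℂ) + 1/4)^3 * ∑ i ∈ Finset.range (n+1), g i * g (n-i)
          = ∑ m ∈ Finset.range (n+1),
              (8*ρ + 6*(n:ℂ) + 1 - 4*(m:ℂ))
                * ((ρ + (m:ℂ) + 1/8)^2 * (g (n-m) * g m)) := by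
      rw [Finset.mul_sum]
      refine sum_sym n _ _ (fun m hm => ?_)
      have e1 : n - (n - m) = m := Nat.sub_sub_self hm
      have e2 : ((n - m : ℕ) : ℂ) = (n : ℂ) - (m : ℂ) := Nat.cast_sub hm
      rw [e1, e2]
      ring
    have step3 :
        ∑ j ∈ Finset.range (n+1+1),
            (8*ρ + 6*((n:ℂ)+1) - 4*(j:ℂ) - 1)
              * (g (n+1-j) * ((ρ + (j:ℂ)) * (ρ + (j:ℂ) - 1/4) * g j))
          = ∑ m ∈ Finset.range (n+1),
              (8*ρ + 6*(n:ℂ) + 1 - 4*(m:ℂ))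
                * ((ρ + (m:ℂ) + 1/8)^2 * (g (n-m) * g m)) := by
      have hsub : ∀ j ∈ Finset.range (n+1+1),
          (8*ρ + 6*((n:ℂ)+1) - 4*(j:ℂ) - 1)
              * (g (n+1-j) * ((ρ + (j:ℂ)) * (ρ + (j:ℂ) - 1/4) * g j))
            = (8*ρ + 6*((n:ℂ)+1) - 4*(j:ℂ) - 1)
              * (g (n+1-j) * (if j = 0 then 0 else (ρ + ((j-1 : ℕ):ℂ) + 1/8)^2 * g (j-1))) := by
        intro j _
        rw [hg j]
      rw [Finset.sum_congr rfl hsub, Finset.sum_range_succ']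
      simp only [Nat.succ_ne_zero, if_false, if_true, reduceIte, mul_zero, add_zero,
        Nat.add_sub_cancel, Nat.succ_sub_succ, Nat.sub_zero]
      refine Finset.sum_congr rfl fun m hm => ?_
      push_cast
      ring
    push_cast
    linear_combination step1 + step3 - step2
end
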